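/- The function Arg : ℍ \ (-∞, 0] → Im(ℍ), defined by Arg(q) = ℐ(q)·arg_ℐ(q) for nonreal q and Arg(q) = 0 for q ∈ (0, ∞), is continuous. -/

import Mathlib

open Quaternion Set

/-- The quaternionic exponential, given by the power series `∑ qᵏ/k!`. -/
noncomputable def qexp (q : ℍ[ℝ]) : ℍ[ℝ] := NormedSpace.exp q

/-- The slice argument `arg_ℐ(q) ∈ (0,π)` of a nonreal quaternion. -/
noncomputable def sliceArg (q : ℍ[ℝ]) : ℝ := Real.arccos (q.re / ‖q‖)

/-- The imaginary unit `ℐ(q)` of a nonreal quaternion. -/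
noncomputable def unitIm (q : ℍ[ℝ]) : ℍ[ℝ] := ‖q.im‖⁻¹ • q.im

/- `Arg(q) = ℐ(q)·arg_ℐ(q)` for nonreal `q`, and `0` on the reals. -/
open scoped Classical in
noncomputable def qArg (q : ℍ[ℝ]) : ℍ[ℝ] :=
  if q.im = 0 then 0 else sliceArg q • unitIm q

/-- The `2k`-th branch of the quaternionic argument:
`Arg_{2k}(q) = ℐ(q)·(arg_ℐ(q) + 2kπ)`. -/
noncomputable def qArg2k (k : ℤ) (q : ℍ[ℝ]) : ℍ[ℝ] :=
  (sliceArg q + 2 * (k : ℝ) * Real.pi) • unitIm q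

lemma sliceArg_continuousAt {q : ℍ[ℝ]} (hq : q ≠ 0) : ContinuousAt sliceArg q := by
  apply Real.continuous_arccos.continuousAt.comp
  exact (Quaternion.continuous_re.continuousAt).div (continuous_norm.continuousAt)
    (norm_ne_zero_iff.mpr hq)

lemma norm_qArg_le (q : ℍ[ℝ]) : ‖qArg q‖ ≤ sliceArg q := by
  unfold qArg
  split_ifs with h
  · simpa using (show (0:ℝ) ≤ sliceArg q from Real.arccos_nonneg _)
  · rw [norm_smul, Real.norm_eq_abs, abs_of_nonneg (show (0:ℝ) ≤ sliceArg q from Real.arccos_nonneg _)]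
    have : ‖unitIm q‖ ≤ 1 := by
      rw [unitIm, norm_smul, norm_inv, norm_norm,
        inv_mul_cancel₀ (norm_ne_zero_iff.mpr h)]
    calc sliceArg q * ‖unitIm q‖ ≤ sliceArg q * 1 :=
          mul_le_mul_of_nonneg_left this (Real.arccos_nonneg _)
      _ = sliceArg q := mul_one _

theorem qArg_continuousOn :
    ContinuousOn qArg {q : ℍ[ℝ] | ¬ (q.im = 0 ∧ q.re ≤ 0)} := by
  intro p hp
  simp only [mem_setOf_eq, not_and, not_le] at hp
  by_cases him : p.im = 0
  · -- p is a positive real; qArg p = 0 and squeeze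
    have hre : 0 < p.re := hp him
    have hp0 : p ≠ 0 := fun h => by simp [h] at hre
    have hnorm : ‖p‖ = p.re := by
      have : p = ((p.re : ℝ) : ℍ[ℝ]) := by
        conv_lhs => rw [← p.re_add_im, him]
        simp
      rw [this, Quaternion.norm_coe, Real.norm_eq_abs, abs_of_pos hre, Quaternion.re_coe]
    have hsp : sliceArg p = 0 := by
      simp [sliceArg, hnorm, div_self hre.ne']
    have hqp : qArg p = 0 := by simp [qArg, him]
    rw [ContinuousWithinAt, hqp]
    have htend : Filter.Tendsto sliceArg (nhdsWithin p {q : ℍ[ℝ] | ¬ (q.im = 0 ∧ q.re ≤ 0)}) (nhds 0) := by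
      rw [show (nhds (0:ℝ)) = nhds (sliceArg p) by rw [hsp]]
      exact (sliceArg_continuousAt hp0).continuousWithinAt
    exact squeeze_zero_norm (fun q => norm_qArg_le q) htend
  · -- p is nonreal; qArg agrees with a continuous function near p
    have hopen : IsOpen {q : ℍ[ℝ] | q.im ≠ 0} :=
      isOpen_ne.preimage Quaternion.continuous_im
    have hcont : ContinuousAt (fun q => sliceArg q • unitIm q) p := by
      have hp0 : p ≠ 0 := fun h => him (by simp [h])
      apply ContinuousAt.smul (sliceArg_continuousAt hp0)
      apply ContinuousAt.smul (f := fun q : ℍ[ℝ] => ‖q.im‖⁻¹) (g := fun q : ℍ[ℝ] => q.im)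
      · exact ((continuous_norm.comp Quaternion.continuous_im).continuousAt).inv₀
          (norm_ne_zero_iff.mpr him)
      · exact Quaternion.continuous_im.continuousAt
    have : ContinuousAt qArg p := by
      apply hcont.congr
      filter_upwards [hopen.mem_nhds him] with q hq
      simp [qArg, hq]
    exact this.continuousWithinAt
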